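/- Let R be a commutative ring, Q ∈ R[y] and H ∈ R[x,y]. Then Q(H(x,y)) is a coordinate of R[x,y] if and only if Q(y) is a coordinate of R[y] and H(x,y) is a coordinate of R[x,y]. In particular, the coordinates of R[x,y] lying in R[y] are exactly the coordinates of R[y]. -/
import Mathlib

theorem aux_inj {S : Type*} [CommRing S] [IsNoetherianRing S]
    (φ : S →+* S) (h : Function.Surjective φ) : Function.Injective φ := by
  have hmono : Monotone fun n : ℕ => RingHom.ker (φ ^ n) := by
    apply monotone_nat_of_le_succ
    intro n x hx
    have : (φ ^ (n+1)) x = φ ((φ ^ n) x) := by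
      rw [pow_succ']
      rfl
    simp only [RingHom.mem_ker] at hx ⊢
    rw [this, hx, map_zero]
  obtain ⟨N, hN⟩ := monotone_stabilizes_iff_noetherian.mpr ‹IsNoetherianRing S›
    ⟨fun n : ℕ => RingHom.ker (φ ^ n), hmono⟩
  rw [injective_iff_map_eq_zero]
  intro x hx
  have hsurj : Function.Surjective (φ ^ N) := by
    rw [RingHom.coe_pow]
    exact Function.Surjective.iterate h N
  obtain ⟨y, rfl⟩ := hsurj x
  have h1 : y ∈ RingHom.ker (φ ^ (N+1)) := by
    have : (φ ^ (N+1)) y = φ ((φ ^ N) y) := by rw [pow_succ']; rfl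
    rw [RingHom.mem_ker, this, hx]
  have h2 := hN (N+1) (Nat.le_succ N)
  simp only [OrderHom.coe_mk] at h2
  rw [← h2] at h1
  exact h1

open Polynomial in
theorem aux_comp_symm {R : Type*} [CommRing R] (p q : Polynomial R)
    (h : p.comp q = Polynomial.X) : q.comp p = Polynomial.X := by
  classical
  set u : Finset R := p.coeffs ∪ q.coeffs with hu
  set T : Subring R := Subring.closure (↑u : Set R) with hT
  have hpc : (↑p.coeffs : Set R) ⊆ T :=
    le_trans (fun x hx => Finset.mem_coe.mpr (Finset.mem_union_left _ hx))
      Subring.subset_closure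
  have hqc : (↑q.coeffs : Set R) ⊆ T :=
    le_trans (fun x hx => Finset.mem_coe.mpr (Finset.mem_union_right _ hx))
      Subring.subset_closure
  have hnoeth : IsNoetherianRing T := by
    have h1 : (Algebra.adjoin ℤ (↑u : Set R)).FG := Subalgebra.fg_adjoin_finset u
    have h2 : Algebra.FiniteType ℤ (Algebra.adjoin ℤ (↑u : Set R)) :=
      (Subalgebra.fg_iff_finiteType _).mp h1
    have h3 : IsNoetherianRing (Algebra.adjoin ℤ (↑u : Set R)) :=
      Algebra.FiniteType.isNoetherianRing ℤ _
    exact isNoetherianRing_of_ringEquiv _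
      (Subring.closureEquivAdjoinInt (↑u : Set R)).symm.toRingEquiv
  set p' : Polynomial T := p.toSubring T hpc with hp'
  set q' : Polynomial T := q.toSubring T hqc with hq'
  have hmapp : p'.map T.subtype = p := p.map_toSubring T hpc
  have hmapq : q'.map T.subtype = q := q.map_toSubring T hqc
  have hinjmap : Function.Injective (Polynomial.map T.subtype : Polynomial T → Polynomial R) :=
    Polynomial.map_injective _ Subtype.coe_injective
  have hcomp' : p'.comp q' = X := by
    apply hinjmap
    rw [Polynomial.map_comp, hmapp, hmapq, h, Polynomial.map_X]
  have hsurj : Function.Surjective (Polynomial.aeval q' : Polynomial T →ₐ[T] Polynomial T) := by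
    rw [← AlgHom.range_eq_top, eq_top_iff, ← Polynomial.adjoin_X]
    apply Algebra.adjoin_le
    rw [Set.singleton_subset_iff]
    exact ⟨p', hcomp'⟩
  have hinj : Function.Injective (Polynomial.aeval q' : Polynomial T →ₐ[T] Polynomial T) :=
    aux_inj (Polynomial.aeval q' : Polynomial T →ₐ[T] Polynomial T).toRingHom hsurj
  have hkey : q'.comp p' = X := by
    apply hinj
    show Polynomial.aeval q' (q'.comp p') = Polynomial.aeval q' X
    rw [← Polynomial.comp_eq_aeval, ← Polynomial.comp_eq_aeval, Polynomial.comp_assoc,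
      hcomp', Polynomial.comp_X, Polynomial.X_comp]
  have := congrArg (Polynomial.map T.subtype) hkey
  rwa [Polynomial.map_comp, hmapp, hmapq, Polynomial.map_X] at this

theorem lift_exists {R : Type*} [CommRing R] (p q : Polynomial R)
    (hpq : p.comp q = Polynomial.X) (hqp : q.comp p = Polynomial.X) :
    ∃ e : MvPolynomial (Fin 2) R ≃ₐ[R] MvPolynomial (Fin 2) R,
      e (MvPolynomial.X 1) = Polynomial.aeval (MvPolynomial.X 1) p := by
  classical
  let L : Polynomial R → (MvPolynomial (Fin 2) R →ₐ[R] MvPolynomial (Fin 2) R) :=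
    fun a => MvPolynomial.aeval ![MvPolynomial.X 0, Polynomial.aeval (MvPolynomial.X 1) a]
  have hL1 : ∀ a : Polynomial R, L a (MvPolynomial.X 1)
      = Polynomial.aeval (MvPolynomial.X 1) a := by
    intro a
    simp [L]
  have hL0 : ∀ a : Polynomial R, L a (MvPolynomial.X 0) = MvPolynomial.X 0 := by
    intro a
    simp [L]
  have comp_id : ∀ a b : Polynomial R, b.comp a = Polynomial.X →
      (L a).comp (L b) = AlgHom.id R (MvPolynomial (Fin 2) R) := by
    intro a b hba
    apply MvPolynomial.algHom_ext
    intro i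
    fin_cases i
    · simp [AlgHom.comp_apply, hL0]
    · rw [AlgHom.comp_apply]
      show L a (L b (MvPolynomial.X 1)) = MvPolynomial.X 1
      rw [hL1, ← Polynomial.aeval_algHom_apply, hL1, ← Polynomial.aeval_comp, hba,
        Polynomial.aeval_X]
  refine ⟨AlgEquiv.ofAlgHom (L p) (L q) (comp_id p q hqp) (comp_id q p hpq), ?_⟩
  show L p (MvPolynomial.X 1) = _
  exact hL1 p

theorem key_iff {R : Type*} [CommRing R] (Q : Polynomial R) (H : MvPolynomial (Fin 2) R) :
    (∃ σ : MvPolynomial (Fin 2) R ≃ₐ[R] MvPolynomial (Fin 2) R,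
        σ (MvPolynomial.X 1) = Polynomial.aeval H Q) ↔
      ((∃ σ : Polynomial R ≃ₐ[R] Polynomial R, σ Polynomial.X = Q) ∧
        (∃ σ : MvPolynomial (Fin 2) R ≃ₐ[R] MvPolynomial (Fin 2) R,
          σ (MvPolynomial.X 1) = H)) := by
  constructor
  · rintro ⟨σ, hσ⟩
    have h1 : MvPolynomial.X 1 = Polynomial.aeval (σ.symm H) Q :=
      calc MvPolynomial.X 1 = σ.symm (σ (MvPolynomial.X 1)) := (σ.symm_apply_apply _).symm
        _ = σ.symm (Polynomial.aeval H Q) := by rw [hσ]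
        _ = Polynomial.aeval (σ.symm H) Q := (Polynomial.aeval_algHom_apply σ.symm H Q).symm
    set π : MvPolynomial (Fin 2) R →ₐ[R] Polynomial R :=
      MvPolynomial.aeval ![0, Polynomial.X] with hπ
    set k : Polynomial R := π (σ.symm H) with hk
    have h2 : Polynomial.X = Polynomial.aeval k Q := by
      have h3 := (congrArg π h1).trans
        (Polynomial.aeval_algHom_apply π (σ.symm H) Q).symm
      have h4 : π (MvPolynomial.X 1) = Polynomial.X := by simp [hπ]
      rw [h4] at h3
      exact h3
    have hQk : Q.comp k = Polynomial.X := by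
      rw [Polynomial.comp_eq_aeval]; exact h2.symm
    have hkQ : k.comp Q = Polynomial.X := aux_comp_symm Q k hQk
    refine ⟨⟨Polynomial.algEquivOfCompEqX Q k hQk hkQ, by simp⟩, ?_⟩
    obtain ⟨Ψ, hΨ⟩ := lift_exists k Q hkQ hQk
    refine ⟨Ψ.trans σ, ?_⟩
    show σ (Ψ (MvPolynomial.X 1)) = H
    rw [hΨ, ← Polynomial.aeval_algHom_apply, hσ, ← Polynomial.aeval_comp, hkQ,
      Polynomial.aeval_X]
  · rintro ⟨⟨σQ, hσQ⟩, ⟨ρ, hρ⟩⟩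
    set k : Polynomial R := σQ.symm Polynomial.X with hk
    have hσQeq : (σQ : Polynomial R →ₐ[R] Polynomial R) = Polynomial.aeval Q :=
      Polynomial.algHom_ext (by simpa using hσQ)
    have hkQ : k.comp Q = Polynomial.X := by
      have h0 : σQ k = Polynomial.X := σQ.apply_symm_apply Polynomial.X
      rwa [show σQ k = Polynomial.aeval Q k from DFunLike.congr_fun hσQeq k,
        ← Polynomial.comp_eq_aeval] at h0
    have hQk : Q.comp k = Polynomial.X := aux_comp_symm k Q hkQ
    obtain ⟨Φ, hΦ⟩ := lift_exists Q k hQk hkQ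
    refine ⟨Φ.trans ρ, ?_⟩
    show ρ (Φ (MvPolynomial.X 1)) = _
    rw [hΦ, ← Polynomial.aeval_algHom_apply, hρ]



/-- `Q(H(x,y))` is a coordinate of `R[x,y]` iff `Q` is a coordinate of `R[y]` and `H`
is a coordinate of `R[x,y]`; in particular the coordinates of `R[x,y]` lying in `R[y]`
are exactly the coordinates of `R[y]`. -/
theorem coordinate_comp_iff (R : Type*) [CommRing R] (Q : Polynomial R)
    (H : MvPolynomial (Fin 2) R) :
    ((∃ σ : MvPolynomial (Fin 2) R ≃ₐ[R] MvPolynomial (Fin 2) R,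
        σ (MvPolynomial.X 1) = Polynomial.aeval H Q) ↔
      ((∃ σ : Polynomial R ≃ₐ[R] Polynomial R, σ Polynomial.X = Q) ∧
        (∃ σ : MvPolynomial (Fin 2) R ≃ₐ[R] MvPolynomial (Fin 2) R,
          σ (MvPolynomial.X 1) = H))) ∧
    (∀ P : Polynomial R,
      (∃ σ : MvPolynomial (Fin 2) R ≃ₐ[R] MvPolynomial (Fin 2) R,
        σ (MvPolynomial.X 1) = Polynomial.aeval (MvPolynomial.X 1) P) ↔
      (∃ σ : Polynomial R ≃ₐ[R] Polynomial R, σ Polynomial.X = P)) := by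
  refine ⟨key_iff Q H, fun P => ?_⟩
  constructor
  · intro h
    exact ((key_iff P (MvPolynomial.X 1)).mp h).1
  · intro h
    exact (key_iff P (MvPolynomial.X 1)).mpr ⟨h, ⟨AlgEquiv.refl, rfl⟩⟩
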